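/- Let L > 0 and let u : [0,L] → ℝ (or ℂ) be absolutely continuous with u(0) = u(L) = 0, u' ∈ L²(0,L), and u not identically zero. Then sup_{x ∈ [0,L]} |u(x)|² ≤ ‖u‖·‖u'‖·(1 − 2·exp(−L·‖u'‖/‖u‖)), where ‖·‖ = ‖·‖_{L²(0,L)}. -/

import Mathlib

set_option maxHeartbeats 1000000

open MeasureTheory Real

namespace DIIR
open Set intervalIntegral

variable {L : ℝ} {u u' : ℝ → ℂ}

noncomputable def F (u : ℝ → ℂ) (t : ℝ) : ℝ := ‖u t‖ ^ 2

noncomputable def phi (u u' : ℝ → ℂ) (t : ℝ) : ℝ := 2 * ((starRingEnd ℂ) (u t) * u' t).re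




lemma F_eq (t : ℝ) : F u t = (u t).re ^ 2 + (u t).im ^ 2 := by
  rw [F, Complex.sq_norm, Complex.normSq_apply]; ring

lemma phi_eq (t : ℝ) : phi u u' t = 2 * ((u t).re * (u' t).re + (u t).im * (u' t).im) := by
  simp [phi, Complex.mul_re]

lemma abs_phi_le' (t : ℝ) : |phi u u' t| ≤ 2 * ‖u t‖ * ‖u' t‖ := by
  have h1 : |((starRingEnd ℂ) (u t) * u' t).re| ≤ ‖(starRingEnd ℂ) (u t) * u' t‖ :=
    Complex.abs_re_le_norm _
  have h2 : ‖(starRingEnd ℂ) (u t) * u' t‖ = ‖u t‖ * ‖u' t‖ := by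
    rw [norm_mul]; simp
  rw [phi, abs_mul, abs_two]
  nlinarith [norm_nonneg (u t), norm_nonneg (u' t)]

lemma contOn (hderiv : ∀ x ∈ Icc (0:ℝ) L, HasDerivWithinAt u (u' x) (Icc (0:ℝ) L) x) :
    ContinuousOn u (Icc 0 L) := fun x hx => (hderiv x hx).continuousWithinAt

lemma hasDerivAt_F (hderiv : ∀ x ∈ Icc (0:ℝ) L, HasDerivWithinAt u (u' x) (Icc (0:ℝ) L) x)
    {x : ℝ} (hx : x ∈ Ioo (0:ℝ) L) : HasDerivAt (F u) (phi u u' x) x := by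
  have hu : HasDerivAt u (u' x) x :=
    (hderiv x (Ioo_subset_Icc_self hx)).hasDerivAt (Icc_mem_nhds hx.1 hx.2)
  have hre : HasDerivAt (fun t => (u t).re) ((u' x).re) x :=
    (Complex.reCLM.hasFDerivAt.comp_hasDerivAt x hu)
  have him : HasDerivAt (fun t => (u t).im) ((u' x).im) x :=
    (Complex.imCLM.hasFDerivAt.comp_hasDerivAt x hu)
  have : HasDerivAt (fun t => (u t).re ^ 2 + (u t).im ^ 2)
      (2 * (u x).re * (u' x).re + 2 * (u x).im * (u' x).im) x := by
    have h1 := (hre.pow 2)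
    have h2 := (him.pow 2)
    have h3 : HasDerivAt (fun t => (u t).re ^ 2 + (u t).im ^ 2) _ x := h1.add h2
    simpa [pow_one, mul_comm, mul_assoc, mul_left_comm] using h3
  have heq : (fun t => (u t).re ^ 2 + (u t).im ^ 2) = F u := by
    funext t; rw [F_eq]
  rw [heq] at this
  convert this using 1
  rw [phi_eq]; ring

lemma aesm_u' (hderiv : ∀ x ∈ Icc (0:ℝ) L, HasDerivWithinAt u (u' x) (Icc (0:ℝ) L) x) :
    AEStronglyMeasurable u' (volume.restrict (Icc (0:ℝ) L)) := by
  refine ⟨deriv u, (stronglyMeasurable_deriv u), ?_⟩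
  have hnull : (volume.restrict (Icc (0:ℝ) L)) ((Ioo (0:ℝ) L)ᶜ) = 0 := by
    rw [Measure.restrict_apply (measurableSet_Ioo.compl)]
    have hsub : (Ioo (0:ℝ) L)ᶜ ∩ Icc 0 L ⊆ {0, L} := by
      intro x hx
      rcases hx with ⟨hx1, hx2⟩
      simp only [mem_compl_iff, mem_Ioo, not_and_or, not_lt] at hx1
      rcases hx1 with h | h
      · left; exact le_antisymm h hx2.1 |>.symm ▸ rfl
      · right; exact le_antisymm hx2.2 h
    refine le_antisymm (le_trans (measure_mono hsub) ?_) (by positivity)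
    have : volume ({0, L} : Set ℝ) = 0 :=
      Set.Finite.measure_zero (Set.toFinite _) volume
    simp [this]
  have hae : ∀ᵐ x ∂(volume.restrict (Icc (0:ℝ) L)), x ∈ Ioo (0:ℝ) L := by
    rw [ae_iff]
    convert hnull using 2
    rfl
  filter_upwards [hae] with x hx
  exact (((hderiv x (Ioo_subset_Icc_self hx)).hasDerivAt (Icc_mem_nhds hx.1 hx.2)).deriv).symm


section assume_all
variable (hL : 0 < L)
  (hderiv : ∀ x ∈ Icc (0:ℝ) L, HasDerivWithinAt u (u' x) (Icc (0:ℝ) L) x)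
  (hu' : IntervalIntegrable (fun x => ‖u' x‖ ^ 2) volume 0 L)

include hderiv in
lemma aesm_sub {p q : ℝ} (hsub : Set.uIcc p q ⊆ Icc (0:ℝ) L) :
    AEStronglyMeasurable u' (volume.restrict (Set.uIoc p q)) :=
  (aesm_u' hderiv).mono_measure
    (Measure.restrict_mono (fun x hx => hsub (Set.uIoc_subset_uIcc hx)) le_rfl)

include hderiv in
lemma aesm_u_sub {p q : ℝ} (hsub : Set.uIcc p q ⊆ Icc (0:ℝ) L) :
    AEStronglyMeasurable u (volume.restrict (Set.uIoc p q)) :=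
  ((ContinuousOn.aestronglyMeasurable
    (fun x hx => (hderiv x hx).continuousWithinAt) measurableSet_Icc).mono_measure
    (Measure.restrict_mono (fun x hx => hsub (Set.uIoc_subset_uIcc hx)) le_rfl))

include hderiv in
lemma aesm_phi {p q : ℝ} (hsub : Set.uIcc p q ⊆ Icc (0:ℝ) L) :
    AEStronglyMeasurable (phi u u') (volume.restrict (Set.uIoc p q)) := by
  have h1 := aesm_u_sub hderiv hsub
  have h2 := aesm_sub hderiv hsub
  have hconj : AEStronglyMeasurable (fun t => (starRingEnd ℂ) (u t))
      (volume.restrict (Set.uIoc p q)) :=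
    Complex.continuous_conj.comp_aestronglyMeasurable h1
  have : AEStronglyMeasurable (fun t => (starRingEnd ℂ) (u t) * u' t)
      (volume.restrict (Set.uIoc p q)) := hconj.mul h2
  exact (Complex.continuous_re.comp_aestronglyMeasurable this).const_mul 2


lemma F_nonneg (t : ℝ) : 0 ≤ F u t := by simp only [F]; positivity

lemma aesm_max0 {f : ℝ → ℝ} {μ : Measure ℝ} (h : AEStronglyMeasurable f μ) :
    AEStronglyMeasurable (fun t => max (f t) 0) μ := h.sup aestronglyMeasurable_const

include hL hu' in
lemma II_nsq {p q : ℝ} (hsub : Set.uIcc p q ⊆ Icc (0:ℝ) L) :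
    IntervalIntegrable (fun t => ‖u' t‖ ^ 2) volume p q :=
  hu'.mono_set (by rwa [Set.uIcc_of_le (le_of_lt hL)])

include hL hderiv hu' in
lemma II_n {p q : ℝ} (hsub : Set.uIcc p q ⊆ Icc (0:ℝ) L) :
    IntervalIntegrable (fun t => ‖u' t‖) volume p q := by
  refine IntervalIntegrable.mono_fun' (g := fun t => (1 + ‖u' t‖^2)/2)
    ((intervalIntegrable_const.add (II_nsq hL hu' hsub)).div_const 2) ((aesm_sub hderiv hsub).norm) ?_
  refine Filter.Eventually.of_forall fun t => ?_
  have := norm_nonneg (u' t)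
  simp only [norm_norm]
  nlinarith [sq_nonneg (‖u' t‖ - 1)]

include hderiv in
lemma contOnF' : ContinuousOn (F u) (Icc 0 L) := by
  have hcu : ContinuousOn u (Icc 0 L) := fun x hx => (hderiv x hx).continuousWithinAt
  exact hcu.norm.pow 2

include hderiv in
lemma II_F {p q : ℝ} (hsub : Set.uIcc p q ⊆ Icc (0:ℝ) L) :
    IntervalIntegrable (F u) volume p q :=
  ((contOnF' hderiv).mono hsub).intervalIntegrable

include hL hderiv hu' in
lemma II_phi {p q : ℝ} (hsub : Set.uIcc p q ⊆ Icc (0:ℝ) L) :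
    IntervalIntegrable (phi u u') volume p q := by
  refine IntervalIntegrable.mono_fun' (g := fun t => F u t + ‖u' t‖^2)
    ((II_F hderiv hsub).add (II_nsq hL hu' hsub)) (aesm_phi hderiv hsub) ?_
  refine Filter.Eventually.of_forall fun t => ?_
  have h1 := abs_phi_le' (u := u) (u' := u') t
  have h2 : F u t = ‖u t‖^2 := rfl
  simp only [Real.norm_eq_abs]
  nlinarith [sq_nonneg (‖u t‖ - ‖u' t‖)]

include hL hderiv hu' in
lemma coreA (h0 : u 0 = 0) (k : ℝ) (hk : 0 ≤ k) {x₀ : ℝ} (hx₀ : x₀ ∈ Icc (0:ℝ) L) :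
    exp (-(k*x₀)) * ‖u x₀‖ ≤
      ∫ t in (0:ℝ)..x₀, exp (-(k*t)) * max (‖u' t‖ - k * ‖u t‖) 0 := by
  have hx0 : 0 ≤ x₀ := hx₀.1
  have hsub : Set.uIcc (0:ℝ) x₀ ⊆ Icc 0 L := by
    rw [Set.uIcc_of_le hx0]; exact Icc_subset_Icc le_rfl hx₀.2
  have hIccsub : Icc (0:ℝ) x₀ ⊆ Icc 0 L := Icc_subset_Icc le_rfl hx₀.2
  have hcu : ContinuousOn u (Icc 0 L) := fun x hx => (hderiv x hx).continuousWithinAt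
  have hIn : IntervalIntegrable (fun t => ‖u' t‖) volume 0 x₀ := II_n hL hderiv hu' hsub
  have hIv : IntervalIntegrable (fun t => ‖u t‖) volume 0 x₀ :=
    ((hcu.mono hsub).norm).intervalIntegrable
  have aesm_n : AEStronglyMeasurable (fun t => ‖u' t‖) (volume.restrict (Set.uIoc (0:ℝ) x₀)) :=
    (aesm_sub hderiv hsub).norm
  have aesm_v : AEStronglyMeasurable (fun t => ‖u t‖) (volume.restrict (Set.uIoc (0:ℝ) x₀)) :=
    (aesm_u_sub hderiv hsub).norm
  have hexp_le_one : ∀ t ∈ Set.Ioc (0:ℝ) x₀, exp (-(k*t)) ≤ 1 := fun t ht => by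
    rw [Real.exp_le_one_iff]
    have := ht.1
    nlinarith
  have hIH : IntervalIntegrable
      (fun t => exp (-(k*t)) * max (‖u' t‖ - k * ‖u t‖) 0) volume 0 x₀ := by
    refine IntervalIntegrable.mono_fun' (g := fun t => ‖u' t‖ + k * ‖u t‖)
      (hIn.add (hIv.const_mul k)) ?_ ?_
    · exact ((Real.continuous_exp.comp ((continuous_const.mul continuous_id).neg)).aestronglyMeasurable).mul
        (aesm_max0 (aesm_n.sub (aesm_v.const_mul k)))
    · rw [Set.uIoc_of_le hx0]
      filter_upwards [ae_restrict_mem measurableSet_Ioc] with t ht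
      have h1 := hexp_le_one t ht
      have h2 : max (‖u' t‖ - k * ‖u t‖) 0 ≤ ‖u' t‖ + k * ‖u t‖ := by
        apply max_le <;> nlinarith [norm_nonneg (u' t), norm_nonneg (u t), mul_nonneg hk (norm_nonneg (u t))]
      simp only [Real.norm_eq_abs]
      rw [abs_mul, abs_of_pos (exp_pos _), abs_of_nonneg (le_max_right _ _)]
      nlinarith [le_max_right (‖u' t‖ - k * ‖u t‖) (0:ℝ), exp_pos (-(k*t))]
  refine le_of_forall_pos_le_add fun δ hδ => ?_
  set s : ℝ → ℝ := fun t => Real.sqrt (F u t + δ^2) with hs_def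
  have hspos : ∀ t, 0 < s t := fun t =>
    Real.sqrt_pos.2 (by nlinarith [F_nonneg (u := u) t, sq_nonneg δ])
  have hsδ : ∀ t, δ ≤ s t := fun t => by
    rw [hs_def]
    calc δ = Real.sqrt (δ^2) := (Real.sqrt_sq hδ.le).symm
    _ ≤ _ := Real.sqrt_le_sqrt (by nlinarith [F_nonneg (u := u) t])
  have hvle : ∀ t, ‖u t‖ ≤ s t := fun t => by
    rw [hs_def]
    calc ‖u t‖ = Real.sqrt (F u t) := by rw [F]; exact (Real.sqrt_sq (norm_nonneg _)).symm
    _ ≤ _ := Real.sqrt_le_sqrt (by nlinarith [sq_nonneg δ])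
  set G : ℝ → ℝ := fun t => exp (-(k*t)) * s t with hG_def
  set G' : ℝ → ℝ := fun t =>
    (-k * exp (-(k*t))) * s t + exp (-(k*t)) * (phi u u' t / (2 * s t)) with hG'_def
  have hcontF : ContinuousOn (F u) (Icc 0 x₀) := (contOnF' hderiv).mono hIccsub
  have hconts : ContinuousOn s (Icc 0 x₀) := (hcontF.add continuousOn_const).sqrt
  have hcexp : Continuous (fun t : ℝ => exp (-(k*t))) :=
    Real.continuous_exp.comp ((continuous_const.mul continuous_id).neg)
  have hcontG : ContinuousOn G (Icc 0 x₀) := (hcexp.continuousOn).mul hconts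
  have hderG : ∀ x ∈ Ioo (0:ℝ) x₀, HasDerivWithinAt G (G' x) (Ioi x) x := by
    intro x hx
    have hxL : x ∈ Ioo (0:ℝ) L := ⟨hx.1, lt_of_lt_of_le hx.2 hx₀.2⟩
    have hw : HasDerivAt (fun t => exp (-(k*t))) (-k * exp (-(k*x))) x := by
      have h1 : HasDerivAt (fun t : ℝ => -(k*t)) (-k) x := by
        simpa [neg_mul] using ((hasDerivAt_id x).const_mul (-k))
      simpa [mul_comm] using h1.exp
    have hFd : HasDerivAt (F u) (phi u u' x) x := hasDerivAt_F hderiv hxL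
    have hsd : HasDerivAt s (phi u u' x / (2 * s x)) x :=
      (hFd.add_const (δ^2)).sqrt (ne_of_gt (by nlinarith [F_nonneg (u := u) x, sq_nonneg δ]))
    exact ((hw.mul hsd).hasDerivWithinAt)
  have hIphi : IntervalIntegrable (phi u u') volume 0 x₀ := II_phi hL hderiv hu' hsub
  have hIF : IntervalIntegrable (F u) volume 0 x₀ := II_F hderiv hsub
  have aesm_s : AEStronglyMeasurable s (volume.restrict (Set.uIoc (0:ℝ) x₀)) := by
    have : ContinuousOn s (Icc 0 L) := ((contOnF' hderiv).add continuousOn_const).sqrt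
    exact (this.aestronglyMeasurable measurableSet_Icc).mono_measure
      (Measure.restrict_mono (fun x hx => hsub (Set.uIoc_subset_uIcc hx)) le_rfl)
  have hIG' : IntervalIntegrable G' volume 0 x₀ := by
    refine IntervalIntegrable.mono_fun'
      (g := fun t => |phi u u' t| * (1/(2*δ)) + k * ((1 + F u t + δ^2)/2))
      ((hIphi.abs.mul_const _).add ((((intervalIntegrable_const.add hIF).add intervalIntegrable_const).div_const 2).const_mul k)) ?_ ?_
    · have hq : AEStronglyMeasurable (fun t => phi u u' t / (2 * s t))
          (volume.restrict (Set.uIoc (0:ℝ) x₀)) := by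
        have h1 := aesm_phi hderiv hsub
        have h2 := aesm_s
        rw [aestronglyMeasurable_iff_aemeasurable] at *
        exact h1.div ((aemeasurable_const (b := (2:ℝ))).mul h2)
      exact ((hcexp.aestronglyMeasurable.const_mul (-k)).mul aesm_s).add
        (hcexp.aestronglyMeasurable.mul hq)
    · rw [Set.uIoc_of_le hx0]
      filter_upwards [ae_restrict_mem measurableSet_Ioc] with t ht
      have h1 := hexp_le_one t ht
      have hst := hspos t
      have hsδt := hsδ t
      have hFt := F_nonneg (u := u) t
      have epos := exp_pos (-(k*t))
      simp only [Real.norm_eq_abs]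
      have hb1 : |(-k * exp (-(k*t))) * s t| ≤ k * ((1 + F u t + δ^2)/2) := by
        rw [abs_mul, abs_mul, abs_neg, abs_of_nonneg hk, abs_of_pos epos, abs_of_pos hst]
        have hsle : s t ≤ (1 + (F u t + δ^2))/2 := by
          have h := Real.sqrt_le_sqrt (le_refl (F u t + δ^2))
          nlinarith [sq_nonneg (s t - 1), Real.sq_sqrt (by positivity : (0:ℝ) ≤ F u t + δ^2)]
        nlinarith [mul_nonneg hk hst.le]
      have hb2 : |exp (-(k*t)) * (phi u u' t / (2 * s t))| ≤ |phi u u' t| * (1/(2*δ)) := by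
        rw [abs_mul, abs_div, abs_of_pos epos, abs_of_pos (by positivity : (0:ℝ) < 2 * s t)]
        have : |phi u u' t| / (2 * s t) ≤ |phi u u' t| / (2 * δ) := by
          rw [div_le_div_iff₀ (by positivity) (by positivity)]
          nlinarith [mul_le_mul_of_nonneg_left hsδt (abs_nonneg (phi u u' t))]
        calc exp (-(k*t)) * (|phi u u' t| / (2 * s t)) ≤ 1 * (|phi u u' t| / (2 * s t)) := by
              apply mul_le_mul_of_nonneg_right h1 (by positivity)
        _ = |phi u u' t| / (2 * s t) := by ring
        _ ≤ |phi u u' t| / (2 * δ) := this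
        _ = |phi u u' t| * (1/(2*δ)) := by ring
      calc |G' t| ≤ |(-k * exp (-(k*t))) * s t| + |exp (-(k*t)) * (phi u u' t / (2 * s t))| :=
            abs_add_le _ _
      _ ≤ |phi u u' t| * (1/(2*δ)) + k * ((1 + F u t + δ^2)/2) := by linarith
  have key : ∫ t in (0:ℝ)..x₀, G' t = G x₀ - G 0 :=
    integral_eq_sub_of_hasDeriv_right_of_le hx0 hcontG hderG hIG'
  have hG0 : G 0 = δ := by
    simp only [hG_def, hs_def, mul_zero, neg_zero, Real.exp_zero, one_mul]
    rw [show F u 0 = 0 by simp [F, h0]]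
    rw [zero_add, Real.sqrt_sq hδ.le]
  have hpt : ∀ t ∈ Icc (0:ℝ) x₀, G' t ≤ exp (-(k*t)) * max (‖u' t‖ - k * ‖u t‖) 0 := by
    intro t ht
    have hst := hspos t
    have h2 : phi u u' t / (2 * s t) ≤ ‖u' t‖ := by
      rw [div_le_iff₀ (by positivity)]
      have h3 := abs_phi_le' (u := u) (u' := u') t
      have h4 := hvle t
      nlinarith [norm_nonneg (u' t), abs_le.1 h3]
    have hkey : phi u u' t / (2 * s t) - k * s t ≤ max (‖u' t‖ - k * ‖u t‖) 0 := by
      have h5 := mul_le_mul_of_nonneg_left (hvle t) hk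
      have h6 := le_max_left (‖u' t‖ - k * ‖u t‖) (0:ℝ)
      linarith
    calc G' t = exp (-(k*t)) * (phi u u' t / (2 * s t) - k * s t) := by rw [hG'_def]; ring
    _ ≤ exp (-(k*t)) * max (‖u' t‖ - k * ‖u t‖) 0 :=
        mul_le_mul_of_nonneg_left hkey (exp_pos _).le
  calc exp (-(k*x₀)) * ‖u x₀‖ ≤ exp (-(k*x₀)) * s x₀ :=
        mul_le_mul_of_nonneg_left (hvle x₀) (exp_pos _).le
  _ = (G x₀ - G 0) + δ := by rw [hG0, hG_def]; ring
  _ = (∫ t in (0:ℝ)..x₀, G' t) + δ := by rw [key]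
  _ ≤ (∫ t in (0:ℝ)..x₀, exp (-(k*t)) * max (‖u' t‖ - k * ‖u t‖) 0) + δ :=
      add_le_add_left (integral_mono_on hx0 hIG' hIH hpt) δ

end assume_all

section main
variable (hL : 0 < L)
  (hderiv : ∀ x ∈ Icc (0:ℝ) L, HasDerivWithinAt u (u' x) (Icc (0:ℝ) L) x)
  (hu' : IntervalIntegrable (fun x => ‖u' x‖ ^ 2) volume 0 L)

include hL hderiv hu' in
lemma half (h0 : u 0 = 0) (k : ℝ) (hk : 0 < k) {x₀ : ℝ} (hx₀ : x₀ ∈ Ioc (0:ℝ) L) :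
    k * ‖u x₀‖^2 * (1 + 2 * exp (-(2*k*x₀))) ≤
      (∫ t in (0:ℝ)..x₀, ‖u' t‖^2) + k^2 * ∫ t in (0:ℝ)..x₀, ‖u t‖^2 := by
  have hx0 : 0 ≤ x₀ := hx₀.1.le
  have hsub : Set.uIcc (0:ℝ) x₀ ⊆ Icc 0 L := by
    rw [Set.uIcc_of_le hx0]; exact Icc_subset_Icc le_rfl hx₀.2
  have hIccsub : Icc (0:ℝ) x₀ ⊆ Icc 0 L := Icc_subset_Icc le_rfl hx₀.2
  set m := ‖u x₀‖ with hm_def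
  set B₁ := ∫ t in (0:ℝ)..x₀, ‖u' t‖^2 with hB₁
  set A₁ := ∫ t in (0:ℝ)..x₀, ‖u t‖^2 with hA₁
  have hFA : A₁ = ∫ t in (0:ℝ)..x₀, F u t := rfl
  have hInsq : IntervalIntegrable (fun t => ‖u' t‖^2) volume 0 x₀ := II_nsq hL hu' hsub
  have hIF : IntervalIntegrable (F u) volume 0 x₀ := II_F hderiv hsub
  have hIphi : IntervalIntegrable (phi u u') volume 0 x₀ := II_phi hL hderiv hu' hsub
  have hB₁0 : 0 ≤ B₁ := intervalIntegral.integral_nonneg hx0 (fun t _ => by positivity)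
  have hA₁0 : 0 ≤ A₁ := intervalIntegral.integral_nonneg hx0 (fun t _ => by positivity)
  -- FTC for F
  have hFTC : ∫ t in (0:ℝ)..x₀, phi u u' t = m^2 := by
    have h := integral_eq_sub_of_hasDeriv_right_of_le hx0 ((contOnF' hderiv).mono hIccsub)
      (fun x hx => (hasDerivAt_F hderiv ⟨hx.1, lt_of_lt_of_le hx.2 hx₀.2⟩).hasDerivWithinAt)
      hIphi
    rw [h]
    simp [F, h0, hm_def]
  -- the max function
  set X : ℝ → ℝ := fun t => max (‖u' t‖ - k * ‖u t‖) 0 with hX_def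
  have hX_nonneg : ∀ t, 0 ≤ X t := fun t => le_max_right _ _
  have aesm_n : AEStronglyMeasurable (fun t => ‖u' t‖) (volume.restrict (Set.uIoc (0:ℝ) x₀)) :=
    (aesm_sub hderiv hsub).norm
  have aesm_v : AEStronglyMeasurable (fun t => ‖u t‖) (volume.restrict (Set.uIoc (0:ℝ) x₀)) :=
    (aesm_u_sub hderiv hsub).norm
  have aesm_X : AEStronglyMeasurable X (volume.restrict (Set.uIoc (0:ℝ) x₀)) :=
    aesm_max0 (aesm_n.sub (aesm_v.const_mul k))
  have hX2pt : ∀ t, (X t)^2 ≤ ‖u' t‖^2 + k^2 * F u t - k * phi u u' t := by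
    intro t
    have habs := abs_phi_le' (u := u) (u' := u') t
    have hFt : F u t = ‖u t‖^2 := rfl
    have h1 := (abs_le.1 habs).2
    have h2 := norm_nonneg (u t); have h3 := norm_nonneg (u' t)
    rcases max_cases (‖u' t‖ - k * ‖u t‖) (0:ℝ) with ⟨he, _⟩ | ⟨he, _⟩ <;>
      rw [hX_def] <;> simp only [he] <;> nlinarith [sq_nonneg (‖u' t‖ - k * ‖u t‖),
        mul_le_mul_of_nonneg_left h1 hk.le]
  have hIX2 : IntervalIntegrable (fun t => (X t)^2) volume 0 x₀ := by
    refine IntervalIntegrable.mono_fun' (g := fun t => 2*‖u' t‖^2 + 2*k^2 * F u t)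
      ((hInsq.const_mul 2).add (hIF.const_mul (2*k^2))) (aesm_X.pow 2) ?_
    refine Filter.Eventually.of_forall fun t => ?_
    have h2 := norm_nonneg (u t); have h3 := norm_nonneg (u' t)
    have hFt : F u t = ‖u t‖^2 := rfl
    have hXle : X t ≤ ‖u' t‖ + k * ‖u t‖ := by
      rw [hX_def]
      apply max_le <;> nlinarith [mul_nonneg hk.le h2]
    simp only [Real.norm_eq_abs]
    rw [abs_of_nonneg (sq_nonneg (X t))]
    nlinarith [mul_le_mul hXle hXle (hX_nonneg t) (by positivity : (0:ℝ) ≤ ‖u' t‖ + k * ‖u t‖),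
      sq_nonneg (‖u' t‖ - k*‖u t‖), hFt]
  have hX2int : ∫ t in (0:ℝ)..x₀, (X t)^2 ≤ B₁ + k^2 * A₁ - k * m^2 := by
    have hle := integral_mono_on hx0 hIX2
      ((hInsq.add (hIF.const_mul (k^2))).sub (hIphi.const_mul k))
      (fun t _ => hX2pt t)
    rw [integral_sub (hInsq.add (hIF.const_mul (k^2))) (hIphi.const_mul k),
      integral_add hInsq (hIF.const_mul (k^2)), intervalIntegral.integral_const_mul, intervalIntegral.integral_const_mul,
      hFTC] at hle
    calc ∫ t in (0:ℝ)..x₀, (X t)^2 ≤ _ := hle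
    _ = B₁ + k^2 * A₁ - k * m^2 := by rw [hFA]
  -- AM-GM integral estimate
  have hAM : ∀ c : ℝ, 0 < c → exp (-(k*x₀)) * m ≤
      (1/(2*c)) * (B₁ + k^2 * A₁ - k * m^2) + (c/2) * ((1 - exp (-(2*k*x₀)))/(2*k)) := by
    intro c hc
    have hcore := coreA hL hderiv hu' h0 k hk.le (Icc_subset_Icc le_rfl le_rfl ⟨hx0, hx₀.2⟩)
    have hIeX : IntervalIntegrable (fun t => exp (-(k*t)) * X t) volume 0 x₀ := by
      refine IntervalIntegrable.mono_fun' (g := fun t => ‖u' t‖ + k * ‖u t‖)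
        ((II_n hL hderiv hu' hsub).add
          ((((show ContinuousOn u (Icc 0 L) from fun x hx =>
            (hderiv x hx).continuousWithinAt).mono hsub).norm.intervalIntegrable).const_mul k))
        ?_ ?_
      · exact ((Real.continuous_exp.comp ((continuous_const.mul continuous_id).neg)).aestronglyMeasurable).mul aesm_X
      · rw [Set.uIoc_of_le hx0]
        filter_upwards [ae_restrict_mem measurableSet_Ioc] with t ht
        have h1 : exp (-(k*t)) ≤ 1 := by
          rw [Real.exp_le_one_iff]; nlinarith [ht.1]
        have h2 := norm_nonneg (u t); have h3 := norm_nonneg (u' t)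
        have hXle : X t ≤ ‖u' t‖ + k * ‖u t‖ := by
          rw [hX_def]; apply max_le <;> nlinarith [mul_nonneg hk.le h2]
        simp only [Real.norm_eq_abs]
        rw [abs_mul, abs_of_pos (exp_pos _), abs_of_nonneg (hX_nonneg t)]
        nlinarith [hX_nonneg t, exp_pos (-(k*t))]
    have hIe2 : IntervalIntegrable (fun t => exp (-(2*k*t))) volume 0 x₀ :=
      (Real.continuous_exp.comp ((continuous_const.mul continuous_id).neg)).intervalIntegrable _ _
    have hW : ∫ t in (0:ℝ)..x₀, exp (-(2*k*t)) = (1 - exp (-(2*k*x₀)))/(2*k) := by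
      have hd : ∀ t ∈ Set.uIcc (0:ℝ) x₀, HasDerivAt (fun y => -(1/(2*k)) * exp (-(2*k*y)))
          (exp (-(2*k*t))) t := by
        intro t _
        have h1 : HasDerivAt (fun y : ℝ => -(2*k*y)) (-(2*k)) t := by
          simpa [neg_mul] using ((hasDerivAt_id t).const_mul (-(2*k)))
        have h2 := h1.exp
        have h3 := h2.const_mul (-(1/(2*k)))
        convert h3 using 1
        · rfl
        · rfl
        · field_simp
      rw [integral_eq_sub_of_hasDerivAt hd hIe2]
      field_simp
      rw [mul_zero, neg_zero, Real.exp_zero]; ring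
    have hpt : ∀ t ∈ Icc (0:ℝ) x₀, exp (-(k*t)) * X t ≤
        (1/(2*c)) * (X t)^2 + (c/2) * exp (-(2*k*t)) := by
      intro t _
      have he2 : exp (-(k*t)) * exp (-(k*t)) = exp (-(2*k*t)) := by
        rw [← Real.exp_add]; congr 1; ring
      rw [show (1/(2*c)) * (X t)^2 + (c/2) * exp (-(2*k*t)) =
        ((X t)^2 + c^2 * exp (-(2*k*t)))/(2*c) by field_simp, le_div_iff₀ (by positivity)]
      nlinarith [sq_nonneg (X t - c * exp (-(k*t))), he2]
    have hmono := integral_mono_on hx0 hIeX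
      (((hIX2.const_mul (1/(2*c))).add (hIe2.const_mul (c/2)))) hpt
    rw [integral_add (hIX2.const_mul (1/(2*c))) (hIe2.const_mul (c/2)),
      intervalIntegral.integral_const_mul, intervalIntegral.integral_const_mul, hW] at hmono
    have hfinal : (1/(2*c)) * ∫ t in (0:ℝ)..x₀, (X t)^2 ≤
        (1/(2*c)) * (B₁ + k^2 * A₁ - k * m^2) :=
      mul_le_mul_of_nonneg_left hX2int (by positivity)
    calc exp (-(k*x₀)) * m ≤ ∫ t in (0:ℝ)..x₀, exp (-(k*t)) * X t := hcore
    _ ≤ _ := hmono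
    _ ≤ _ := by linarith
  -- choose c optimally
  rcases eq_or_lt_of_le (norm_nonneg (u x₀)) with hm0 | hmpos
  · rw [hm_def, ← hm0]
    have : (0:ℝ) ≤ k^2 * A₁ := by positivity
    nlinarith
  · set E := exp (-(k*x₀)) with hE_def
    have hEpos : 0 < E := exp_pos _
    have hE2 : E^2 = exp (-(2*k*x₀)) := by
      rw [hE_def, pow_two, ← Real.exp_add]; congr 1; ring
    have hE2lt : E^2 < 1 := by
      rw [hE2, Real.exp_lt_one_iff]; nlinarith [hx₀.1]
    set W := (1 - exp (-(2*k*x₀)))/(2*k) with hW_def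
    have hWpos : 0 < W := by
      rw [hW_def]
      apply div_pos _ (by linarith)
      rw [← hE2]; linarith
    set D := B₁ + k^2 * A₁ - k * m^2 with hD_def
    have hc := hAM (E * m / W) (by positivity)
    have hEm : 0 < E * m := by positivity
    have heq : (1/(2*(E*m/W))) * D + ((E*m/W)/2) * W = W*D/(2*(E*m)) + E*m/2 := by
      field_simp
    rw [heq] at hc
    have h5 : E*m/2 ≤ W*D/(2*(E*m)) := by linarith
    rw [div_le_div_iff₀ (by norm_num) (by positivity)] at h5
    have hsq : E^2 * m^2 ≤ W * D := by nlinarith [h5]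
    -- conclude
    have h2k : (0:ℝ) < 2*k := by linarith
    have hD1 : 2 * k * m^2 * E^2 ≤ D * (1 - E^2) := by
      rw [hW_def, ← hE2, div_mul_eq_mul_div, le_div_iff₀ h2k] at hsq
      nlinarith [hsq]
    have h1e : 0 < 1 - E^2 := by linarith
    have hq : 0 < 2*k*m^2*E^2 := by positivity
    have hDpos : 0 < D := by nlinarith [hD1, hq, h1e]
    have hfin : 2 * k * m^2 * E^2 ≤ D := by nlinarith [hE2lt, hDpos, hD1, h1e]
    rw [hD_def] at hfin
    rw [← hE2]
    nlinarith [hfin]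


include hL hderiv hu' in
lemma halfTriv (h0 : u 0 = 0) {x₀ : ℝ} (hx₀ : x₀ ∈ Icc (0:ℝ) L) :
    ‖u x₀‖^2 ≤ x₀ * ∫ t in (0:ℝ)..x₀, ‖u' t‖^2 := by
  have hx0 : 0 ≤ x₀ := hx₀.1
  have hsub : Set.uIcc (0:ℝ) x₀ ⊆ Icc 0 L := by
    rw [Set.uIcc_of_le hx0]; exact Icc_subset_Icc le_rfl hx₀.2
  set m := ‖u x₀‖ with hm_def
  set B₁ := ∫ t in (0:ℝ)..x₀, ‖u' t‖^2 with hB₁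
  have hB₁0 : 0 ≤ B₁ := intervalIntegral.integral_nonneg hx0 (fun t _ => by positivity)
  have hInsq : IntervalIntegrable (fun t => ‖u' t‖^2) volume 0 x₀ := II_nsq hL hu' hsub
  have hIn : IntervalIntegrable (fun t => ‖u' t‖) volume 0 x₀ := II_n hL hderiv hu' hsub
  have hcore := coreA hL hderiv hu' h0 0 le_rfl hx₀
  have heq : (fun t => exp (-(0*t)) * max (‖u' t‖ - 0 * ‖u t‖) 0) = fun t => ‖u' t‖ := by
    funext t
    simp [max_eq_left (norm_nonneg (u' t))]
  rw [heq] at hcore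
  simp only [zero_mul, neg_zero, Real.exp_zero, one_mul] at hcore
  rcases eq_or_lt_of_le (norm_nonneg (u x₀)) with hm0 | hmpos
  · rw [hm_def, ← hm0]
    nlinarith [mul_nonneg hx0 hB₁0]
  · have hx₀pos : 0 < x₀ := by
      rcases eq_or_lt_of_le hx0 with h | h
      · exfalso; rw [← h, h0] at hmpos; simp at hmpos
      · exact h
    set c := m / x₀ with hc_def
    have hcpos : 0 < c := by positivity
    have hpt : ∀ t ∈ Icc (0:ℝ) x₀, ‖u' t‖ ≤ (1/(2*c)) * ‖u' t‖^2 + c/2 := by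
      intro t _
      rw [show (1/(2*c)) * ‖u' t‖^2 + c/2 = (‖u' t‖^2 + c^2)/(2*c) by field_simp,
        le_div_iff₀ (by positivity)]
      nlinarith [sq_nonneg (‖u' t‖ - c)]
    have hmono := integral_mono_on hx0 hIn
      ((hInsq.const_mul (1/(2*c))).add intervalIntegrable_const) hpt
    rw [integral_add (hInsq.const_mul (1/(2*c))) intervalIntegrable_const,
      intervalIntegral.integral_const_mul, intervalIntegral.integral_const] at hmono
    simp only [sub_zero, smul_eq_mul] at hmono
    have : m ≤ (1/(2*c)) * B₁ + x₀ * (c/2) := le_trans hcore hmono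
    rw [hc_def] at this
    have h1 : (1/(2*(m/x₀))) * B₁ + x₀ * ((m/x₀)/2) = x₀*B₁/(2*m) + m/2 := by
      field_simp
    rw [h1] at this
    have h5 : m/2 ≤ x₀*B₁/(2*m) := by linarith
    rw [div_le_div_iff₀ (by norm_num) (by positivity)] at h5
    nlinarith [h5]

-- reflection setup
include hL hderiv in
lemma hderiv_refl : ∀ x ∈ Icc (0:ℝ) L,
    HasDerivWithinAt (fun y => u (L - y)) ((fun y => -u' (L - y)) x) (Icc (0:ℝ) L) x := by
  intro x hx
  have h1 : HasDerivWithinAt (fun y : ℝ => L - y) (-1) (Icc (0:ℝ) L) x :=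
    (hasDerivWithinAt_id x _).const_sub L
  have hmem : L - x ∈ Icc (0:ℝ) L := ⟨by linarith [hx.2], by linarith [hx.1]⟩
  have hmaps : Set.MapsTo (fun y : ℝ => L - y) (Icc 0 L) (Icc 0 L) := by
    intro y hy
    simp only [Set.mem_Icc] at *
    constructor <;> linarith [hy.1, hy.2]
  have h2 := HasDerivWithinAt.scomp x (hderiv (L - x) hmem) h1 hmaps
  exact h2.congr_deriv (by simp)

include hu' in
lemma hu'_refl : IntervalIntegrable (fun x => ‖(fun y => -u' (L - y)) x‖ ^ 2) volume 0 L := by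
  have h := (hu'.comp_sub_left L).symm
  simp only [sub_zero, sub_self] at h
  have heq : (fun x => ‖(fun y => -u' (L - y)) x‖ ^ 2) = fun x => ‖u' (L - x)‖ ^ 2 := by
    funext x; simp
  rw [heq]
  exact h

include hL hderiv hu' in
lemma star (h0 : u 0 = 0) (hLend : u L = 0) (k : ℝ) (hk : 0 < k) {x₀ : ℝ}
    (hx₀ : x₀ ∈ Ioo (0:ℝ) L) :
    k * ‖u x₀‖^2 * (2 + 4 * exp (-(k*L))) ≤
      (∫ t in (0:ℝ)..L, ‖u' t‖^2) + k^2 * ∫ t in (0:ℝ)..L, ‖u t‖^2 := by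
  have h1 := half hL hderiv hu' h0 k hk (x₀ := x₀) ⟨hx₀.1, hx₀.2.le⟩
  have h2 := half hL (hderiv_refl hL hderiv) (hu'_refl hu') (by simpa using hLend) k hk
    (x₀ := L - x₀) ⟨by linarith [hx₀.2], by linarith [hx₀.1]⟩
  -- rewrite reflected integrals
  have e1 : (∫ t in (0:ℝ)..(L-x₀), ‖(fun y => -u' (L - y)) t‖^2) =
      ∫ t in x₀..L, ‖u' t‖^2 := by
    have heq : (fun t => ‖(fun y => -u' (L - y)) t‖^2) = fun t => ‖u' (L - t)‖^2 := by
      funext t; simp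
    rw [heq]
    have := integral_comp_sub_left (a := (0:ℝ)) (b := L - x₀) (fun t => ‖u' t‖^2) L
    simpa using this
  have e2 : (∫ t in (0:ℝ)..(L-x₀), ‖(fun y => u (L - y)) t‖^2) =
      ∫ t in x₀..L, ‖u t‖^2 := by
    have := integral_comp_sub_left (a := (0:ℝ)) (b := L - x₀) (fun t => ‖u t‖^2) L
    simpa using this
  rw [e1, e2] at h2
  have hval : ‖(fun y => u (L - y)) (L - x₀)‖ = ‖u x₀‖ := by simp
  rw [hval] at h2
  -- additivity
  have hsub1 : Set.uIcc (0:ℝ) x₀ ⊆ Icc 0 L := by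
    rw [Set.uIcc_of_le hx₀.1.le]; exact Icc_subset_Icc le_rfl hx₀.2.le
  have hsub2 : Set.uIcc x₀ L ⊆ Icc 0 L := by
    rw [Set.uIcc_of_le hx₀.2.le]; exact Icc_subset_Icc hx₀.1.le le_rfl
  have hadd1 : (∫ t in (0:ℝ)..x₀, ‖u' t‖^2) + (∫ t in x₀..L, ‖u' t‖^2) =
      ∫ t in (0:ℝ)..L, ‖u' t‖^2 :=
    integral_add_adjacent_intervals (II_nsq hL hu' hsub1) (II_nsq hL hu' hsub2)
  have hIF1 : IntervalIntegrable (fun t => ‖u t‖^2) volume 0 x₀ := II_F hderiv hsub1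
  have hIF2 : IntervalIntegrable (fun t => ‖u t‖^2) volume x₀ L := II_F hderiv hsub2
  have hadd2 : (∫ t in (0:ℝ)..x₀, ‖u t‖^2) + (∫ t in x₀..L, ‖u t‖^2) =
      ∫ t in (0:ℝ)..L, ‖u t‖^2 :=
    integral_add_adjacent_intervals hIF1 hIF2
  -- exponential AM-GM
  set P := exp (-(k*x₀)) with hP
  set Q := exp (-(k*(L-x₀))) with hQ
  have hPQ : P * Q = exp (-(k*L)) := by rw [hP, hQ, ← Real.exp_add]; congr 1; ring
  have hP2 : P^2 = exp (-(2*k*x₀)) := by rw [hP, pow_two, ← Real.exp_add]; congr 1; ring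
  have hQ2 : Q^2 = exp (-(2*k*(L-x₀))) := by rw [hQ, pow_two, ← Real.exp_add]; congr 1; ring
  have hAM : 2 * (P*Q) ≤ P^2 + Q^2 := by nlinarith [sq_nonneg (P - Q)]
  have hm2 : (0:ℝ) ≤ ‖u x₀‖^2 := by positivity
  rw [← hP2] at h1
  rw [← hQ2] at h2
  rw [← hadd1, ← hadd2, ← hPQ]
  nlinarith [h1, h2, mul_le_mul_of_nonneg_left hAM (mul_nonneg hk.le hm2)]

include hL hderiv hu' in
lemma triv (h0 : u 0 = 0) (hLend : u L = 0) {x₀ : ℝ} (hx₀ : x₀ ∈ Icc (0:ℝ) L) :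
    ‖u x₀‖^2 ≤ L * (∫ t in (0:ℝ)..L, ‖u' t‖^2) / 4 := by
  have hBglob : (0:ℝ) ≤ ∫ t in (0:ℝ)..L, ‖u' t‖^2 :=
    intervalIntegral.integral_nonneg hL.le (fun t _ => by positivity)
  rcases eq_or_lt_of_le hx₀.1 with h0' | hx₀pos
  · rw [← h0', h0]; simp; positivity
  rcases eq_or_lt_of_le hx₀.2 with hL' | hx₀lt
  · rw [hL', hLend]; simp; positivity
  have h1 := halfTriv hL hderiv hu' h0 hx₀
  have h2 := halfTriv hL (hderiv_refl hL hderiv) (hu'_refl hu') (by simpa using hLend)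
    (x₀ := L - x₀) ⟨by linarith, by linarith⟩
  have e1 : (∫ t in (0:ℝ)..(L-x₀), ‖(fun y => -u' (L - y)) t‖^2) =
      ∫ t in x₀..L, ‖u' t‖^2 := by
    have heq : (fun t => ‖(fun y => -u' (L - y)) t‖^2) = fun t => ‖u' (L - t)‖^2 := by
      funext t; simp
    rw [heq]
    have := integral_comp_sub_left (a := (0:ℝ)) (b := L - x₀) (fun t => ‖u' t‖^2) L
    simpa using this
  rw [e1] at h2
  have hval : ‖(fun y => u (L - y)) (L - x₀)‖ = ‖u x₀‖ := by simp
  rw [hval] at h2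
  have hsub1 : Set.uIcc (0:ℝ) x₀ ⊆ Icc 0 L := by
    rw [Set.uIcc_of_le hx₀.1]; exact Icc_subset_Icc le_rfl hx₀.2
  have hsub2 : Set.uIcc x₀ L ⊆ Icc 0 L := by
    rw [Set.uIcc_of_le hx₀.2]; exact Icc_subset_Icc hx₀.1 le_rfl
  have hadd1 : (∫ t in (0:ℝ)..x₀, ‖u' t‖^2) + (∫ t in x₀..L, ‖u' t‖^2) =
      ∫ t in (0:ℝ)..L, ‖u' t‖^2 :=
    integral_add_adjacent_intervals (II_nsq hL hu' hsub1) (II_nsq hL hu' hsub2)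
  set m := ‖u x₀‖
  set C₁ := ∫ t in (0:ℝ)..x₀, ‖u' t‖^2
  set C₂ := ∫ t in x₀..L, ‖u' t‖^2
  have hC₁ : 0 ≤ C₁ := intervalIntegral.integral_nonneg hx₀.1 (fun t _ => by positivity)
  have hC₂ : 0 ≤ C₂ := intervalIntegral.integral_nonneg (by linarith) (fun t _ => by positivity)
  -- m² ≤ x₀C₁, m² ≤ (L-x₀)C₂  ⇒  4m² ≤ L(C₁+C₂)
  rw [← hadd1, le_div_iff₀ (by norm_num : (0:ℝ) < 4)]
  nlinarith [mul_le_mul_of_nonneg_left h1 (by linarith : (0:ℝ) ≤ L - x₀),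
    mul_le_mul_of_nonneg_left h2 (by linarith : (0:ℝ) ≤ x₀),
    mul_nonneg (sq_nonneg (2*x₀ - L)) (add_nonneg hC₁ hC₂), hL]


lemma N1 {t : ℝ} (h2 : 2 ≤ t) (h3 : t ≤ 3) : t/4 ≤ 1 - 2*exp (-t) := by
  have he : (2.7182818283:ℝ) < exp 1 := exp_one_gt_d9
  have he2 : (7.389:ℝ) < exp 2 := by
    rw [show (2:ℝ) = 1+1 by norm_num, Real.exp_add]; nlinarith
  rcases le_total t 2.3 with h | h
  · have h1 : exp (-t) ≤ exp (-2) := exp_le_exp.2 (by linarith)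
    have hprod : exp (-2) * exp 2 = 1 := by rw [← Real.exp_add]; norm_num
    have h5 : exp (-2) ≤ 0.136 := by nlinarith [exp_pos (-2)]
    linarith
  · have h1 : exp (-t) ≤ exp (-2.3) := exp_le_exp.2 (by linarith)
    have hprod : exp (-2.3) * exp 2.3 = 1 := by rw [← Real.exp_add]; norm_num
    have h03 : (1.3:ℝ) ≤ exp 0.3 := by
      have := Real.add_one_le_exp (0.3:ℝ); linarith
    have he23 : (9.6:ℝ) < exp 2.3 := by
      rw [show (2.3:ℝ) = 2+0.3 by norm_num, Real.exp_add]
      nlinarith [exp_pos (0.3:ℝ)]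
    have h5 : exp (-2.3) ≤ 0.105 := by nlinarith [exp_pos (-2.3)]
    linarith

theorem main_result
    (hL : 0 < L)
    (hderiv : ∀ x ∈ Set.Icc (0:ℝ) L, HasDerivWithinAt u (u' x) (Set.Icc (0:ℝ) L) x)
    (h0 : u 0 = 0) (hLend : u L = 0)
    (hu' : IntervalIntegrable (fun x => ‖u' x‖ ^ 2) volume 0 L)
    (hne : ∃ x ∈ Set.Icc (0:ℝ) L, u x ≠ 0) :
    ∀ x ∈ Set.Icc (0:ℝ) L, ‖u x‖ ^ 2 ≤
      Real.sqrt (∫ x in (0:ℝ)..L, ‖u x‖ ^ 2) *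
        Real.sqrt (∫ x in (0:ℝ)..L, ‖u' x‖ ^ 2) *
        (1 - 2 * Real.exp (-(L * Real.sqrt (∫ x in (0:ℝ)..L, ‖u' x‖ ^ 2) /
          Real.sqrt (∫ x in (0:ℝ)..L, ‖u x‖ ^ 2)))) := by
  intro x hx
  set A := ∫ y in (0:ℝ)..L, ‖u y‖^2 with hA_def
  set B := ∫ y in (0:ℝ)..L, ‖u' y‖^2 with hB_def
  have hcu : ContinuousOn u (Icc 0 L) := fun y hy => (hderiv y hy).continuousWithinAt
  have hApos : 0 < A := by
    obtain ⟨x₁, hx₁, hne₁⟩ := hne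
    have h := integral_lt_integral_of_continuousOn_of_le_of_exists_lt hL
      (continuousOn_const (c := (0:ℝ))) (hcu.norm.pow 2) (fun y _ => by simp only [Pi.pow_apply]; positivity)
      ⟨x₁, hx₁, pow_pos (norm_pos_iff.2 hne₁) 2⟩
    rw [hA_def]
    simpa using h
  have hBA : A ≤ L^2 * B / 4 := by
    have hptw : ∀ y ∈ Icc (0:ℝ) L, ‖u y‖^2 ≤ L*B/4 := fun y hy => by
      have h := triv hL hderiv hu' h0 hLend hy
      rw [← hB_def] at h
      exact h
    have hIA : IntervalIntegrable (fun y => ‖u y‖^2) volume 0 L :=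
      (hcu.norm.pow 2).intervalIntegrable_of_Icc hL.le
    have h := integral_mono_on hL.le hIA intervalIntegrable_const hptw
    rw [intervalIntegral.integral_const] at h
    rw [hA_def]
    calc (∫ y in (0:ℝ)..L, ‖u y‖^2) ≤ (L - 0) • (L*B/4) := h
    _ = L^2 * B / 4 := by simp [smul_eq_mul]; ring
  have hBpos : 0 < B := by nlinarith [mul_pos hL hL]
  set a := Real.sqrt A with ha_def
  set b := Real.sqrt B with hb_def
  have hapos : 0 < a := Real.sqrt_pos.2 hApos
  have hbpos : 0 < b := Real.sqrt_pos.2 hBpos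
  have ha2 : a^2 = A := Real.sq_sqrt hApos.le
  have hb2 : b^2 = B := Real.sq_sqrt hBpos.le
  set t := L * b / a with ht_def
  have htpos : 0 < t := by positivity
  have ht2 : 2 ≤ t := by
    have h1 : t^2 = L^2*B/A := by
      rw [ht_def, div_pow, mul_pow, hb2, ha2]
    have h2 : 4 ≤ t^2 := by
      rw [h1, le_div_iff₀ hApos]
      nlinarith [hBA]
    nlinarith [htpos]
  have htriv : ‖u x‖^2 ≤ a*b*(t/4) := by
    have h := triv hL hderiv hu' h0 hLend hx
    rw [← hB_def] at h
    have heq : L*B/4 = a*b*(t/4) := by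
      rw [ht_def, ← hb2]
      field_simp
    linarith [heq ▸ h]
  rcases le_or_gt t 3 with h3 | h3
  · calc ‖u x‖^2 ≤ a*b*(t/4) := htriv
    _ ≤ a*b*(1-2*exp (-t)) :=
        mul_le_mul_of_nonneg_left (N1 ht2 h3) (by positivity)
  · set s := exp (-t) with hs_def
    have hs_pos : 0 < s := exp_pos _
    have hs20 : s ≤ 1/20 := by
      have h1 : exp (-t) ≤ exp (-3) := exp_le_exp.2 (by linarith)
      have h2 : exp (-3) * exp 3 = 1 := by rw [← Real.exp_add]; norm_num
      have h3' : (20:ℝ) < exp 3 := by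
        rw [show (3:ℝ) = 1+1+1 by norm_num, Real.exp_add, Real.exp_add]
        nlinarith [exp_one_gt_d9]
      have h4 : exp (-3) ≤ 1/20 := by nlinarith [exp_pos (-3)]
      rw [hs_def]; linarith
    by_cases hux : u x = 0
    · rw [hux]
      simp only [norm_zero]
      rw [show ((0:ℝ))^2 = 0 by norm_num]
      apply mul_nonneg (by positivity)
      linarith
    · have hxIoo : x ∈ Ioo (0:ℝ) L := by
        constructor
        · rcases eq_or_lt_of_le hx.1 with h | h
          · exfalso; rw [← h, h0] at hux; exact hux rfl
          · exact h
        · rcases eq_or_lt_of_le hx.2 with h | h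
          · exfalso; rw [h, hLend] at hux; exact hux rfl
          · exact h
      set ε := 4*s/t with hε_def
      have hεpos : 0 < ε := by positivity
      have hεle : ε ≤ (4/3)*s := by
        rw [hε_def, div_le_iff₀ htpos]
        nlinarith [hs_pos]
      have hε15 : ε ≤ 1/15 := by nlinarith [hεle, hs20]
      set k := (b/a)*(1-ε) with hk_def
      have hkpos : 0 < k := by
        apply mul_pos (by positivity)
        linarith
      have hstar := star hL hderiv hu' h0 hLend k hkpos hxIoo
      rw [← hA_def, ← hB_def] at hstar
      have hkL : k*L = t*(1-ε) := by
        rw [hk_def, ht_def]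
        field_simp
      have hE : exp (-(k*L)) = s * exp (4*s) := by
        rw [hs_def, ← Real.exp_add]
        congr 1
        rw [show -(k*L) = -(t*(1-ε)) by rw [hkL], hε_def]
        field_simp
        ring
      set E4 := exp (4*s) with hE4_def
      have hE4low : 1 + 4*s ≤ E4 := by
        have := Real.add_one_le_exp (4*s)
        rw [hE4_def]; linarith
      have hE4up : E4 ≤ 5/4 := by
        have h1 : exp (-(4*s)) * E4 = 1 := by rw [hE4_def, ← Real.exp_add]; norm_num
        have h2 : 1 - 4*s ≤ exp (-(4*s)) := by
          have := Real.add_one_le_exp (-(4*s)); linarith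
        nlinarith [exp_pos (-(4*s))]
      have hnum : 2 + ε^2/(1-ε) ≤ (1-2*s)*(2+4*s*E4) := by
        have hq : ε^2/(1-ε) ≤ 2*s^2 := by
          rw [div_le_iff₀ (by linarith)]
          nlinarith [hεle, hs_pos, hε15, hεpos, hs20]
        nlinarith [mul_le_mul_of_nonneg_left hE4low (by positivity : (0:ℝ) ≤ 4*s),
          mul_le_mul_of_nonneg_left hE4up (by positivity : (0:ℝ) ≤ 8*s^2), hs_pos, hs20, hq]
      have h1ε : (1:ℝ) - ε ≠ 0 := by
        have : ε < 1 := by linarith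
        linarith
      clear_value A B a b t s ε k E4
      have hsum : b^2/k + k*a^2 = a*b*(2 + ε^2/(1-ε)) := by
        rw [hk_def]
        field_simp [hapos.ne', h1ε]
        ring
      rw [hE] at hstar
      have hdiv : b^2/k + k*a^2 = (b^2 + k^2*a^2)/k := by field_simp
      have hm2 : ‖u x‖^2 * (2 + 4*(s*E4)) ≤ b^2/k + k*a^2 := by
        rw [hdiv, le_div_iff₀ hkpos]
        rw [← hb2, ← ha2] at hstar
        nlinarith [hstar]
      have hfinal : ‖u x‖^2 * (2+4*(s*E4)) ≤ a*b*(1-2*s)*(2+4*(s*E4)) := by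
        calc ‖u x‖^2 * (2+4*(s*E4)) ≤ b^2/k + k*a^2 := hm2
        _ = a*b*(2 + ε^2/(1-ε)) := hsum
        _ ≤ a*b*((1-2*s)*(2+4*s*E4)) := mul_le_mul_of_nonneg_left hnum (by positivity)
        _ = a*b*(1-2*s)*(2+4*(s*E4)) := by ring
      have hpos24 : 0 < 2 + 4*(s*E4) := by nlinarith [hs_pos, hE4low]
      have := (mul_le_mul_iff_of_pos_right hpos24).mp hfinal
      linarith [this]

end main

end DIIR

/-- The refined interpolation inequality for `u ∈ H¹₀(0,L)`, `u ≢ 0`, with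
sharp exponential correction term:
`sup_{x∈[0,L]} |u(x)|² ≤ ‖u‖·‖u'‖·(1 − 2 exp(−L‖u'‖/‖u‖))`. -/
theorem dirichlet_interpolation_inequality_refined
    (L : ℝ) (hL : 0 < L) (u u' : ℝ → ℂ)
    (hderiv : ∀ x ∈ Set.Icc (0:ℝ) L, HasDerivWithinAt u (u' x) (Set.Icc (0:ℝ) L) x)
    (h0 : u 0 = 0) (hLend : u L = 0)
    (hu' : IntervalIntegrable (fun x => ‖u' x‖ ^ 2) volume 0 L)
    (hne : ∃ x ∈ Set.Icc (0:ℝ) L, u x ≠ 0) :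
    ∀ x ∈ Set.Icc (0:ℝ) L, ‖u x‖ ^ 2 ≤
      Real.sqrt (∫ x in (0:ℝ)..L, ‖u x‖ ^ 2) *
        Real.sqrt (∫ x in (0:ℝ)..L, ‖u' x‖ ^ 2) *
        (1 - 2 * Real.exp (-(L * Real.sqrt (∫ x in (0:ℝ)..L, ‖u' x‖ ^ 2) /
          Real.sqrt (∫ x in (0:ℝ)..L, ‖u x‖ ^ 2)))) :=
  DIIR.main_result hL hderiv h0 hLend hu' hne
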